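/- Let N ≥ 1, let γ_l > 0 for l = 1,…,N be channel gains, s > 0 the slot length, W > 0 the bandwidth, e₁ ≥ 0 the initial energy, H_l ≥ 0 (2 ≤ l ≤ N) the energy arrivals, b₁ ≥ 0 the initial data, and B_l ≥ 0 (2 ≤ l ≤ N) the data arrivals. Then for every feasible power allocation ρ there exists a nondecreasing sequence of water levels w₁ ≤ w₂ ≤ … ≤ w_N (w_l ≥ 0) such that the induced allocation ρ'_l = max(w_l − 1/γ_l, 0) is feasible, its total throughput satisfies ∑_{l=1}^N s·W·log₂(1 + ρ'_l·γ_l) ≥ ∑_{l=1}^N s·W·log₂(1 + ρ_l·γ_l), and its total energy satisfies s·∑_{l=1}^N ρ'_l ≤ s·∑_{l=1}^N ρ_l. -/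

import Mathlib

open Finset Real

noncomputable def Rlvl (γ : ℝ) (v : ℝ) : ℝ := Real.logb 2 (max (v * γ) 1)

lemma sum_Icc_split (f : ℕ → ℝ) (a m b : ℕ) (h1 : a ≤ m + 1) (h2 : m ≤ b) :
    ∑ l ∈ Icc a b, f l = (∑ l ∈ Icc a m, f l) + ∑ l ∈ Icc (m+1) b, f l := by
  rw [← Finset.sum_union]
  · congr 1; ext x; simp only [Finset.mem_union, Finset.mem_Icc]; omega
  · rw [Finset.disjoint_left]; intro x hx hx'; simp only [Finset.mem_Icc] at hx hx'; omega

lemma sum_Icc_bot (f : ℕ → ℝ) (a b : ℕ) (h : a ≤ b) :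
    ∑ l ∈ Icc a b, f l = f a + ∑ l ∈ Icc (a+1) b, f l := by
  rw [show Icc a b = insert a (Icc (a+1) b) from by
      ext x; simp only [Finset.mem_insert, Finset.mem_Icc]; omega,
    Finset.sum_insert (by simp)]

lemma aux_max_eq (γ v : ℝ) (hγ : 0 < γ) :
    1 + max (v - 1/γ) 0 * γ = max (v * γ) 1 := by
  rcases le_total v (1/γ) with h | h
  · rw [max_eq_right (by linarith : v - 1/γ ≤ 0), max_eq_right]
    · ring
    · calc v * γ ≤ (1/γ) * γ := by nlinarith
        _ = 1 := by field_simp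
  · rw [max_eq_left (by linarith : (0:ℝ) ≤ v - 1/γ), max_eq_left]
    · field_simp; ring
    · calc (1:ℝ) = (1/γ) * γ := by field_simp
        _ ≤ v * γ := by nlinarith

lemma Rlvl_eq (γ v : ℝ) (hγ : 0 < γ) :
    Real.logb 2 (1 + max (v - 1/γ) 0 * γ) = Rlvl γ v := by
  rw [aux_max_eq γ v hγ]; rfl

lemma Rl_cont (γ : ℝ) : Continuous (fun v : ℝ => Rlvl γ v) := by
  have h1 : Continuous (fun v : ℝ => max (v * γ) 1) := by continuity
  have : Continuous (fun v : ℝ => Real.log (max (v * γ) 1)) := by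
    apply Real.continuousOn_log.comp_continuous h1
    intro x; simp only [Set.mem_compl_iff, Set.mem_singleton_iff]
    have := le_max_right (x * γ) 1; intro hc; rw [hc] at this; norm_num at this
  simpa [Rlvl, Real.logb] using this.div_const (Real.log 2)

lemma Rl_mono (γ : ℝ) (hγ : 0 < γ) {u v : ℝ} (h : u ≤ v) : Rlvl γ u ≤ Rlvl γ v := by
  apply Real.logb_le_logb_of_le one_lt_two (lt_of_lt_of_le one_pos (le_max_right _ _))
  exact max_le_max (by nlinarith) le_rfl

lemma Rl_nonneg (γ v : ℝ) : 0 ≤ Rlvl γ v :=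
  Real.logb_nonneg one_lt_two (le_max_right _ _)

lemma slot_convex (γ p v : ℝ) (hγ : 0 < γ) (hp : 0 ≤ p) (hv : 0 ≤ v) :
    v * (Real.log (1 + p * γ) - Real.log (1 + max (v - 1/γ) 0 * γ)) ≤ p - max (v - 1/γ) 0 := by
  have hpγ : 0 < 1 + p * γ := by nlinarith
  rcases le_total v (1/γ) with h | h
  · rw [max_eq_right (by linarith : v - 1/γ ≤ 0)]
    simp only [zero_mul, add_zero, Real.log_one, sub_zero]
    have h1 : Real.log (1 + p * γ) ≤ p * γ := by
      have := Real.log_le_sub_one_of_pos hpγ; linarith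
    have h2 : 0 ≤ Real.log (1 + p * γ) := Real.log_nonneg (by nlinarith)
    calc v * Real.log (1 + p * γ) ≤ (1/γ) * Real.log (1+p*γ) := by nlinarith
      _ ≤ (1/γ) * (p * γ) := by
          apply mul_le_mul_of_nonneg_left h1 (by positivity)
      _ = p := by field_simp
  · rw [max_eq_left (by linarith : (0:ℝ) ≤ v - 1/γ)]
    have hv' : 0 < v := lt_of_lt_of_le (by positivity) h
    have heq : 1 + (v - 1/γ) * γ = v * γ := by field_simp; ring
    rw [heq]
    have hvγ : 0 < v * γ := by positivity
    set x := (1 + p * γ) / (v * γ) with hx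
    have hx0 : 0 < x := by positivity
    have hlx : Real.log x ≤ x - 1 := Real.log_le_sub_one_of_pos hx0
    have hlog : Real.log (1 + p * γ) - Real.log (v * γ) = Real.log x :=
      (Real.log_div hpγ.ne' hvγ.ne').symm
    rw [hlog]
    have h2 : v * Real.log x ≤ v * (x - 1) := mul_le_mul_of_nonneg_left hlx hv
    have h3 : v * (x - 1) = p - (v - 1/γ) := by
      rw [hx]; field_simp; ring
    linarith

lemma block_energy (A : Finset ℕ) (γ p : ℕ → ℝ) (v : ℝ)
    (hγ : ∀ l ∈ A, 0 < γ l) (hp : ∀ l ∈ A, 0 ≤ p l) (hv : 0 ≤ v)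
    (hrate : ∑ l ∈ A, Real.log (1 + max (v - 1/γ l) 0 * γ l) ≤
      ∑ l ∈ A, Real.log (1 + p l * γ l)) :
    ∑ l ∈ A, max (v - 1/γ l) 0 ≤ ∑ l ∈ A, p l := by
  have key : ∑ l ∈ A, v * (Real.log (1 + p l * γ l) - Real.log (1 + max (v - 1/γ l) 0 * γ l))
      ≤ ∑ l ∈ A, (p l - max (v - 1/γ l) 0) :=
    Finset.sum_le_sum fun l hl => slot_convex (γ l) (p l) v (hγ l hl) (hp l hl) hv
  rw [← Finset.mul_sum, Finset.sum_sub_distrib] at key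
  rw [Finset.sum_sub_distrib] at key
  nlinarith [mul_nonneg hv (sub_nonneg.2 hrate)]

lemma w_mono_chain {N : ℕ} {w : ℕ → ℝ} (hm : ∀ l, 1 ≤ l → l + 1 ≤ N → w l ≤ w (l+1)) :
    ∀ i j, 1 ≤ i → i ≤ j → j ≤ N → w i ≤ w j := by
  intro i j hi
  induction j with
  | zero => intro h1 h2; omega
  | succ m ih =>
    intro h1 h2
    rcases Nat.lt_or_ge i (m+1) with h | h
    · exact le_trans (ih (by omega) (by omega)) (hm m (by omega) h2)
    · have : i = m+1 := by omega
      rw [this]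

lemma claim (N : ℕ) (hN : 1 ≤ N) : ∀ (γ ρ : ℕ → ℝ),
    (∀ l, 1 ≤ l → l ≤ N → 0 < γ l) → (∀ l, 1 ≤ l → l ≤ N → 0 ≤ ρ l) →
    ∃ w : ℕ → ℝ,
      (∀ l, 1 ≤ l → l ≤ N → 0 ≤ w l) ∧
      (∀ l, 1 ≤ l → l + 1 ≤ N → w l ≤ w (l + 1)) ∧
      (∀ n, 1 ≤ n → n ≤ N → ∑ l ∈ Icc 1 n, max (w l - 1 / γ l) 0 ≤ ∑ l ∈ Icc 1 n, ρ l) ∧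
      (∀ n, 1 ≤ n → n ≤ N → ∑ l ∈ Icc 1 n, Real.logb 2 (1 + max (w l - 1 / γ l) 0 * γ l)
          ≤ ∑ l ∈ Icc 1 n, Real.logb 2 (1 + ρ l * γ l)) ∧
      (∑ l ∈ Icc 1 N, Real.logb 2 (1 + ρ l * γ l)
          ≤ ∑ l ∈ Icc 1 N, Real.logb 2 (1 + max (w l - 1 / γ l) 0 * γ l)) := by
  induction N, hN using Nat.le_induction with
  | base =>
    intro γ ρ hγ hρ
    have hγ1 : 0 < γ 1 := hγ 1 le_rfl le_rfl
    have hρ1 : 0 ≤ ρ 1 := hρ 1 le_rfl le_rfl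
    refine ⟨fun _ => ρ 1 + 1/γ 1, ?_, ?_, ?_, ?_, ?_⟩
    · intro l h1 h2; positivity
    · intro l h1 h2; omega
    · intro n h1 h2
      have : n = 1 := by omega
      subst this
      simp only [Finset.Icc_self, Finset.sum_singleton, add_sub_cancel_right,
        max_eq_left hρ1, le_refl]
    · intro n h1 h2
      have : n = 1 := by omega
      subst this
      simp only [Finset.Icc_self, Finset.sum_singleton, add_sub_cancel_right,
        max_eq_left hρ1, le_refl]
    · simp only [Finset.Icc_self, Finset.sum_singleton, add_sub_cancel_right,
        max_eq_left hρ1, le_refl]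
  | succ N hN ih =>
    intro γ ρ hγ hρ
    obtain ⟨w, hw0, hwm, hwE, hwR, hwT⟩ :=
      ih γ ρ (fun l h1 h2 => hγ l h1 (by omega)) (fun l h1 h2 => hρ l h1 (by omega))
    have hγtop : 0 < γ (N+1) := hγ (N+1) (by omega) le_rfl
    have hρtop : 0 ≤ ρ (N+1) := hρ (N+1) (by omega) le_rfl
    have hchain : ∀ i j, 1 ≤ i → i ≤ j → j ≤ N → w i ≤ w j := w_mono_chain hwm
    set rtop : ℝ := Real.logb 2 (1 + ρ (N+1) * γ (N+1)) with hrtop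
    set F : ℕ → ℝ → ℝ := fun j v => ∑ l ∈ Icc j (N+1), Rlvl (γ l) v with hFdef
    set T : ℕ → ℝ := fun j => (∑ l ∈ Icc j N, Rlvl (γ l) (w l)) + rtop with hTdef
    set wp : ℕ → ℝ := fun j => if j ≤ 1 then 0 else w (j-1) with hwpdef
    set S : Finset ℕ := (Icc 1 (N+1)).filter (fun j => F j (wp j) ≤ T j) with hSdef
    have hrtop0 : 0 ≤ rtop :=
      Real.logb_nonneg one_lt_two (by nlinarith)
    have hS1 : 1 ∈ S := by
      simp only [hSdef, Finset.mem_filter]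
      constructor
      · simp only [Finset.mem_Icc]; omega
      · have h0 : F 1 (wp 1) = 0 := by
          rw [hFdef, hwpdef]
          simp only [if_pos le_rfl]
          apply Finset.sum_eq_zero
          intro l _; simp [Rlvl]
        rw [h0, hTdef]
        exact add_nonneg (Finset.sum_nonneg fun l _ => Rl_nonneg _ _) hrtop0
    have hSne : S.Nonempty := ⟨1, hS1⟩
    obtain ⟨k, hkmem, hkmaxS⟩ : ∃ k, k ∈ S ∧ ∀ j ∈ S, j ≤ k :=
      ⟨S.max' hSne, S.max'_mem hSne, fun j hj => S.le_max' j hj⟩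
    have hkIcc : 1 ≤ k ∧ k ≤ N + 1 := by
      have := (Finset.mem_filter.1 hkmem).1
      simpa using this
    have hk1 : 1 ≤ k := hkIcc.1
    have hk2 : k ≤ N + 1 := hkIcc.2
    have hkF : F k (wp k) ≤ T k := (Finset.mem_filter.1 hkmem).2
    have hkmax : ∀ j, 1 ≤ j → j ≤ N + 1 → F j (wp j) ≤ T j → j ≤ k := by
      intro j h1 h2 h3
      apply hkmaxS j
      simp only [hSdef, Finset.mem_filter]
      exact ⟨by simp only [Finset.mem_Icc]; omega, h3⟩
    obtain ⟨k', rfl⟩ : ∃ k', k = k' + 1 := ⟨k - 1, by omega⟩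
    have hwp0 : 0 ≤ wp (k' + 1) := by
      simp only [hwpdef]
      by_cases h : k' + 1 ≤ 1
      · rw [if_pos h]
      · rw [if_neg h]
        exact hw0 (k'+1-1) (by omega) (by omega)
    -- existence of the level v
    have hV : ∃ v, wp (k'+1) ≤ v ∧ (∀ l, k'+1 ≤ l → l ≤ N → v ≤ w l) ∧
        F (k'+1) v = T (k'+1) := by
      rcases Nat.lt_or_ge k' N with hkN | hkN
      · -- k'+1 ≤ N : IVT case
        have hkN' : k' + 1 ≤ N := by omega
        have hab : wp (k'+1) ≤ w (k'+1) := by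
          simp only [hwpdef]
          by_cases h : k' + 1 ≤ 1
          · rw [if_pos h]; exact hw0 (k'+1) (by omega) hkN'
          · rw [if_neg h]
            simp only [Nat.add_sub_cancel]
            exact hwm k' (by omega) (by omega)
        have hnotS : ¬ F (k'+2) (wp (k'+2)) ≤ T (k'+2) := by
          intro h
          have := hkmax (k'+2) (by omega) (by omega) h
          omega
        have hwp2 : wp (k'+2) = w (k'+1) := by
          simp only [hwpdef]
          rw [if_neg (by omega : ¬ k' + 2 ≤ 1)]
          congr 1
        rw [hwp2] at hnotS
        push_neg at hnotS
        have hFsplit : F (k'+1) (w (k'+1)) =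
            Rlvl (γ (k'+1)) (w (k'+1)) + F (k'+2) (w (k'+1)) := by
          simp only [hFdef]
          exact sum_Icc_bot _ (k'+1) (N+1) (by omega)
        have hTsplit : T (k'+1) = Rlvl (γ (k'+1)) (w (k'+1)) + T (k'+2) := by
          simp only [hTdef]
          have := sum_Icc_bot (fun l => Rlvl (γ l) (w l)) (k'+1) N (by omega)
          rw [this]; ring
        have hTb : T (k'+1) ≤ F (k'+1) (w (k'+1)) := by
          rw [hFsplit, hTsplit]; linarith
        have hFc : Continuous (F (k'+1)) := by
          simp only [hFdef]
          exact continuous_finset_sum _ fun l _ => Rl_cont (γ l)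
        have hmem : T (k'+1) ∈ Set.Icc (F (k'+1) (wp (k'+1))) (F (k'+1) (w (k'+1))) :=
          ⟨hkF, hTb⟩
        have := intermediate_value_Icc hab hFc.continuousOn hmem
        obtain ⟨v, hvmem, hveq⟩ := this
        refine ⟨v, hvmem.1, ?_, hveq⟩
        intro l hl1 hl2
        exact le_trans hvmem.2 (hchain (k'+1) l (by omega) hl1 hl2)
      · -- k'+1 = N+1
        have hkeq : k' = N := by omega
        have hFone : ∀ x, F (k'+1) x = Rlvl (γ (N+1)) x := by
          intro x; simp only [hFdef]
          rw [show Icc (k'+1) (N+1) = {N+1} from by rw [hkeq]; exact Finset.Icc_self _,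
            Finset.sum_singleton]
        have hTone : T (k'+1) = rtop := by
          simp only [hTdef]
          rw [show Icc (k'+1) N = (∅ : Finset ℕ) from Finset.Icc_eq_empty (by omega)]
          simp
        have hbase : Rlvl (γ (N+1)) (ρ (N+1) + 1/γ (N+1)) = rtop := by
          have hne : γ (N+1) ≠ 0 := ne_of_gt hγtop
          have hkey : (ρ (N+1) + 1/γ (N+1)) * γ (N+1) = ρ (N+1) * γ (N+1) + 1 := by
            field_simp
          have h1 : (1:ℝ) ≤ ρ (N+1) * γ (N+1) + 1 := by nlinarith
          rw [hrtop, Rlvl, hkey, max_eq_left h1, add_comm]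
        refine ⟨max (ρ (N+1) + 1/γ (N+1)) (wp (k'+1)), le_max_right _ _, ?_, ?_⟩
        · intro l hl1 hl2; omega
        · rw [hFone]
          rcases le_total (wp (k'+1)) (ρ (N+1) + 1/γ (N+1)) with h | h
          · rw [max_eq_left h, hbase, hTone]
          · rw [max_eq_right h, hTone]
            have ha1 : Rlvl (γ (N+1)) (wp (k'+1)) ≤ rtop := by
              have h2 := hkF; rw [hFone, hTone] at h2; exact h2
            have ha2 : rtop ≤ Rlvl (γ (N+1)) (wp (k'+1)) := by
              rw [← hbase]; exact Rl_mono _ hγtop h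
            linarith
    obtain ⟨v, hv1, hv2, hveq⟩ := hV
    have hv0 : 0 ≤ v := le_trans hwp0 hv1
    have hlog2ne : Real.log 2 ≠ 0 := (Real.log_pos (by norm_num)).ne'
    set p : ℕ → ℝ := fun l => if l ≤ N then max (w l - 1/γ l) 0 else ρ (N+1) with hpdef
    have hFv : ∑ l ∈ Icc (k'+1) (N+1), Real.logb 2 (1 + max (v - 1/γ l) 0 * γ l) = T (k'+1) := by
      rw [← hveq]; simp only [hFdef]
      apply Finset.sum_congr rfl
      intro l hl
      have hl' := Finset.mem_Icc.1 hl
      exact Rlvl_eq _ _ (hγ l (by omega) (by omega))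
    have hTw : T (k'+1) =
        (∑ l ∈ Icc (k'+1) N, Real.logb 2 (1 + max (w l - 1/γ l) 0 * γ l)) + rtop := by
      simp only [hTdef]
      congr 1
      apply Finset.sum_congr rfl
      intro l hl
      have hl' := Finset.mem_Icc.1 hl
      exact (Rlvl_eq _ _ (hγ l (by omega) (by omega))).symm
    have hTp : T (k'+1) = ∑ l ∈ Icc (k'+1) (N+1), Real.logb 2 (1 + p l * γ l) := by
      rw [Finset.sum_Icc_succ_top (by omega : k'+1 ≤ N+1), hTw]
      congr 1
      · apply Finset.sum_congr rfl
        intro l hl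
        have hl' := Finset.mem_Icc.1 hl
        simp only [hpdef]; rw [if_pos (by omega : l ≤ N)]
      · rw [hrtop]
        simp only [hpdef]; rw [if_neg (by omega : ¬ N + 1 ≤ N)]
    have hblock : ∑ l ∈ Icc (k'+1) (N+1), max (v - 1/γ l) 0 ≤
        ∑ l ∈ Icc (k'+1) (N+1), p l := by
      apply block_energy _ γ p v
      · intro l hl; have hl' := Finset.mem_Icc.1 hl; exact hγ l (by omega) (by omega)
      · intro l hl
        simp only [hpdef]
        by_cases h : l ≤ N
        · rw [if_pos h]; exact le_max_right _ _
        · rw [if_neg h]; exact hρtop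
      · exact hv0
      · have heq := hFv.trans hTp
        have conv : ∀ (f : ℕ → ℝ), (∑ l ∈ Icc (k'+1) (N+1), Real.logb 2 (f l)) * Real.log 2
            = ∑ l ∈ Icc (k'+1) (N+1), Real.log (f l) := by
          intro f
          rw [Finset.sum_mul]
          apply Finset.sum_congr rfl
          intro l hl
          rw [Real.logb, div_mul_cancel₀ _ hlog2ne]
        have h1 := conv (fun l => 1 + max (v - 1/γ l) 0 * γ l)
        have h2 := conv (fun l => 1 + p l * γ l)
        exact le_of_eq (by rw [← h1, ← h2, heq])
    have hnewtotal : ∑ l ∈ Icc 1 (N+1),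
          Real.logb 2 (1 + max ((if l < k'+1 then w l else v) - 1/γ l) 0 * γ l)
        = (∑ l ∈ Icc 1 N, Real.logb 2 (1 + max (w l - 1/γ l) 0 * γ l)) + rtop := by
      rw [sum_Icc_split (fun l => Real.logb 2 (1 + max ((if l < k'+1 then w l else v) - 1/γ l) 0 * γ l)) 1 k' (N+1) (by omega) (by omega)]
      have hc1 : ∑ l ∈ Icc 1 k',
            Real.logb 2 (1 + max ((if l < k'+1 then w l else v) - 1/γ l) 0 * γ l)
          = ∑ l ∈ Icc 1 k', Real.logb 2 (1 + max (w l - 1/γ l) 0 * γ l) := by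
        apply Finset.sum_congr rfl
        intro l hl
        have hl' := Finset.mem_Icc.1 hl
        rw [if_pos (by omega : l < k'+1)]
      have hc2 : ∑ l ∈ Icc (k'+1) (N+1),
            Real.logb 2 (1 + max ((if l < k'+1 then w l else v) - 1/γ l) 0 * γ l)
          = T (k'+1) := by
        rw [← hFv]
        apply Finset.sum_congr rfl
        intro l hl
        have hl' := Finset.mem_Icc.1 hl
        rw [if_neg (by omega : ¬ l < k'+1)]
      rw [hc1, hc2, hTw, ← add_assoc]
      congr 1
      exact (sum_Icc_split (fun l => Real.logb 2 (1 + max (w l - 1/γ l) 0 * γ l)) 1 k' N (by omega) (by omega)).symm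
    refine ⟨fun l => if l < k' + 1 then w l else v, ?_, ?_, ?_, ?_, ?_⟩
    · -- nonneg
      intro l h1 h2
      dsimp only
      by_cases h : l < k' + 1
      · rw [if_pos h]; exact hw0 l h1 (by omega)
      · rw [if_neg h]; exact hv0
    · -- monotone
      intro l h1 h2
      dsimp only
      by_cases hA : l + 1 < k' + 1
      · rw [if_pos hA, if_pos (by omega)]
        exact hwm l h1 (by omega)
      · by_cases hB : l < k' + 1
        · rw [if_pos hB, if_neg hA]
          have hlk : l = k' := by omega
          subst hlk
          rcases Nat.eq_zero_or_pos l with h0 | h0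
          · omega
          · have : wp (l + 1) = w l := by
              simp only [hwpdef]; simp only [if_neg (by omega : ¬ l + 1 ≤ 1), Nat.add_sub_cancel]
            rw [← this]; exact hv1
        · rw [if_neg hB, if_neg hA]
    · -- prefix energies
      intro n h1 h2
      dsimp only
      by_cases hnk : n < k' + 1
      · have hcong : ∑ l ∈ Icc 1 n, max ((if l < k'+1 then w l else v) - 1/γ l) 0
            = ∑ l ∈ Icc 1 n, max (w l - 1/γ l) 0 := by
          apply Finset.sum_congr rfl
          intro l hl
          have hl' := Finset.mem_Icc.1 hl
          rw [if_pos (by omega : l < k'+1)]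
        rw [hcong]
        exact hwE n h1 (by omega)
      · push_neg at hnk
        rw [sum_Icc_split (fun l => max ((if l < k'+1 then w l else v) - 1/γ l) 0) 1 k' n (by omega) (by omega)]
        have hc1 : ∑ l ∈ Icc 1 k', max ((if l < k'+1 then w l else v) - 1/γ l) 0
            = ∑ l ∈ Icc 1 k', max (w l - 1/γ l) 0 := by
          apply Finset.sum_congr rfl
          intro l hl
          have hl' := Finset.mem_Icc.1 hl
          rw [if_pos (by omega : l < k'+1)]
        have hc2 : ∑ l ∈ Icc (k'+1) n, max ((if l < k'+1 then w l else v) - 1/γ l) 0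
            = ∑ l ∈ Icc (k'+1) n, max (v - 1/γ l) 0 := by
          apply Finset.sum_congr rfl
          intro l hl
          have hl' := Finset.mem_Icc.1 hl
          rw [if_neg (by omega : ¬ l < k'+1)]
        rw [hc1, hc2]
        rcases Nat.lt_or_ge n (N+1) with hnN | hnN
        · have hc3 : ∑ l ∈ Icc (k'+1) n, max (v - 1/γ l) 0
              ≤ ∑ l ∈ Icc (k'+1) n, max (w l - 1/γ l) 0 := by
            apply Finset.sum_le_sum
            intro l hl
            have hl' := Finset.mem_Icc.1 hl
            exact max_le_max (sub_le_sub_right (hv2 l hl'.1 (by omega)) _) le_rfl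
          have hEn := hwE n h1 (by omega)
          rw [sum_Icc_split (fun l => max (w l - 1/γ l) 0) 1 k' n (by omega) (by omega)] at hEn
          linarith
        · have hn : n = N+1 := by omega
          subst hn
          have hps : ∑ l ∈ Icc (k'+1) (N+1), p l
              = (∑ l ∈ Icc (k'+1) N, max (w l - 1/γ l) 0) + ρ (N+1) := by
            rw [Finset.sum_Icc_succ_top (by omega : k'+1 ≤ N+1)]
            congr 1
            · apply Finset.sum_congr rfl
              intro l hl
              have hl' := Finset.mem_Icc.1 hl
              simp only [hpdef]; rw [if_pos (by omega : l ≤ N)]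
            · simp only [hpdef]; rw [if_neg (by omega : ¬ N + 1 ≤ N)]
          have hEN := hwE N (by omega) le_rfl
          rw [sum_Icc_split (fun l => max (w l - 1/γ l) 0) 1 k' N (by omega) (by omega)] at hEN
          rw [Finset.sum_Icc_succ_top (by omega : 1 ≤ N+1) ρ]
          have hb := hblock
          rw [hps] at hb
          linarith
    · -- prefix rates
      intro n h1 h2
      dsimp only
      by_cases hnk : n < k' + 1
      · have hcong : ∑ l ∈ Icc 1 n, Real.logb 2 (1 + max ((if l < k'+1 then w l else v) - 1/γ l) 0 * γ l)
            = ∑ l ∈ Icc 1 n, Real.logb 2 (1 + max (w l - 1/γ l) 0 * γ l) := by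
          apply Finset.sum_congr rfl
          intro l hl
          have hl' := Finset.mem_Icc.1 hl
          rw [if_pos (by omega : l < k'+1)]
        rw [hcong]
        exact hwR n h1 (by omega)
      · push_neg at hnk
        rcases Nat.lt_or_ge n (N+1) with hnN | hnN
        · rw [sum_Icc_split (fun l => Real.logb 2 (1 + max ((if l < k'+1 then w l else v) - 1/γ l) 0 * γ l)) 1 k' n (by omega) (by omega)]
          have hc1 : ∑ l ∈ Icc 1 k', Real.logb 2 (1 + max ((if l < k'+1 then w l else v) - 1/γ l) 0 * γ l)
              = ∑ l ∈ Icc 1 k', Real.logb 2 (1 + max (w l - 1/γ l) 0 * γ l) := by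
            apply Finset.sum_congr rfl
            intro l hl
            have hl' := Finset.mem_Icc.1 hl
            rw [if_pos (by omega : l < k'+1)]
          have hc2 : ∑ l ∈ Icc (k'+1) n, Real.logb 2 (1 + max ((if l < k'+1 then w l else v) - 1/γ l) 0 * γ l)
              ≤ ∑ l ∈ Icc (k'+1) n, Real.logb 2 (1 + max (w l - 1/γ l) 0 * γ l) := by
            apply Finset.sum_le_sum
            intro l hl
            have hl' := Finset.mem_Icc.1 hl
            have hγl : 0 < γ l := hγ l (by omega) (by omega)
            rw [if_neg (by omega : ¬ l < k'+1), Rlvl_eq _ _ hγl, Rlvl_eq _ _ hγl]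
            exact Rl_mono _ hγl (hv2 l hl'.1 (by omega))
          have hRn := hwR n h1 (by omega)
          rw [sum_Icc_split (fun l => Real.logb 2 (1 + max (w l - 1/γ l) 0 * γ l)) 1 k' n (by omega) (by omega)] at hRn
          linarith
        · have hn : n = N+1 := by omega
          subst hn
          rw [hnewtotal, Finset.sum_Icc_succ_top (by omega : 1 ≤ N+1) (fun l => Real.logb 2 (1 + ρ l * γ l))]
          have hRN := hwR N (by omega) le_rfl
          have h1 := hrtop.le
          have h2 := hrtop.ge
          linarith
    · -- total rate
      dsimp only
      rw [hnewtotal, Finset.sum_Icc_succ_top (by omega : 1 ≤ N+1) (fun l => Real.logb 2 (1 + ρ l * γ l))]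
      have h1 := hrtop.le
      have h2 := hrtop.ge
      linarith

/-- For every feasible power allocation there is a feasible allocation
induced by a nondecreasing sequence of nonnegative water levels with at least the
same total throughput and at most the same total energy. -/
theorem stmt_0 (N : ℕ) (hN : 1 ≤ N) (γ H B ρ : ℕ → ℝ) (s W e₁ b₁ : ℝ)
    (hγ : ∀ l, 1 ≤ l → l ≤ N → 0 < γ l) (hs : 0 < s) (hW : 0 < W)
    (he₁ : 0 ≤ e₁) (hH : ∀ l, 2 ≤ l → l ≤ N → 0 ≤ H l)
    (hb₁ : 0 ≤ b₁) (hB : ∀ l, 2 ≤ l → l ≤ N → 0 ≤ B l)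
    (hρ : ∀ l, 1 ≤ l → l ≤ N → 0 ≤ ρ l)
    (hfeas : ∀ n, 1 ≤ n → n ≤ N →
      s * ∑ l ∈ Finset.Icc 1 n, ρ l ≤ e₁ + ∑ l ∈ Finset.Icc 2 n, H l ∧
      ∑ l ∈ Finset.Icc 1 n, s * W * Real.logb 2 (1 + ρ l * γ l) ≤
        b₁ + ∑ l ∈ Finset.Icc 2 n, B l) :
    ∃ w : ℕ → ℝ,
      (∀ l, 1 ≤ l → l ≤ N → 0 ≤ w l) ∧
      (∀ l, 1 ≤ l → l + 1 ≤ N → w l ≤ w (l + 1)) ∧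
      (∀ n, 1 ≤ n → n ≤ N →
        s * ∑ l ∈ Finset.Icc 1 n, max (w l - 1 / γ l) 0 ≤
          e₁ + ∑ l ∈ Finset.Icc 2 n, H l ∧
        ∑ l ∈ Finset.Icc 1 n,
            s * W * Real.logb 2 (1 + max (w l - 1 / γ l) 0 * γ l) ≤
          b₁ + ∑ l ∈ Finset.Icc 2 n, B l) ∧
      (∑ l ∈ Finset.Icc 1 N, s * W * Real.logb 2 (1 + ρ l * γ l) ≤
        ∑ l ∈ Finset.Icc 1 N,
          s * W * Real.logb 2 (1 + max (w l - 1 / γ l) 0 * γ l)) ∧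
      (s * ∑ l ∈ Finset.Icc 1 N, max (w l - 1 / γ l) 0 ≤
        s * ∑ l ∈ Finset.Icc 1 N, ρ l) := by
  obtain ⟨w, h0, hmono, hE, hR, hT⟩ := claim N hN γ ρ hγ hρ
  have hsW : (0:ℝ) ≤ s * W := (mul_pos hs hW).le
  refine ⟨w, h0, hmono, ?_, ?_, ?_⟩
  · intro n hn1 hn2
    obtain ⟨hfe, hfr⟩ := hfeas n hn1 hn2
    constructor
    · calc s * ∑ l ∈ Finset.Icc 1 n, max (w l - 1/γ l) 0
          ≤ s * ∑ l ∈ Finset.Icc 1 n, ρ l :=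
            mul_le_mul_of_nonneg_left (hE n hn1 hn2) hs.le
        _ ≤ _ := hfe
    · calc ∑ l ∈ Finset.Icc 1 n, s * W * Real.logb 2 (1 + max (w l - 1/γ l) 0 * γ l)
          = s * W * ∑ l ∈ Finset.Icc 1 n, Real.logb 2 (1 + max (w l - 1/γ l) 0 * γ l) := by
            rw [Finset.mul_sum]
        _ ≤ s * W * ∑ l ∈ Finset.Icc 1 n, Real.logb 2 (1 + ρ l * γ l) :=
            mul_le_mul_of_nonneg_left (hR n hn1 hn2) hsW
        _ = ∑ l ∈ Finset.Icc 1 n, s * W * Real.logb 2 (1 + ρ l * γ l) := by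
            rw [Finset.mul_sum]
        _ ≤ _ := hfr
  · calc ∑ l ∈ Finset.Icc 1 N, s * W * Real.logb 2 (1 + ρ l * γ l)
        = s * W * ∑ l ∈ Finset.Icc 1 N, Real.logb 2 (1 + ρ l * γ l) := by
          rw [Finset.mul_sum]
      _ ≤ s * W * ∑ l ∈ Finset.Icc 1 N, Real.logb 2 (1 + max (w l - 1/γ l) 0 * γ l) :=
          mul_le_mul_of_nonneg_left hT hsW
      _ = ∑ l ∈ Finset.Icc 1 N, s * W * Real.logb 2 (1 + max (w l - 1/γ l) 0 * γ l) := by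
          rw [Finset.mul_sum]
  · exact mul_le_mul_of_nonneg_left (hE N hN le_rfl) hs.le
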